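/- Let b₁, b₂, b₃, b₄ be real numbers, let t₀ be a complex number with t₀ ∉ {0, 1}, and let h be a function meromorphic at t₀ with a pole of order k ≥ 1 at t₀, satisfying the differential equation t²(t−1)²·h′·(h″)² + ((2h − (2t−1)h′)·h′ + b₁b₂b₃b₄)² = Π_{j=1}^4 (h′ + b_j²) on a punctured neighborhood of t₀. Then k = 1 and the residue of h at t₀ is t₀(t₀−1); that is, h(t) − t₀(t₀−1)/(t−t₀) extends holomorphically to t₀. -/

import Mathlib

set_option maxHeartbeats 1000000 in
private lemma deriv_rep' (t₀ : ℂ) (G : ℂ → ℂ) (hG : AnalyticAt ℂ G t₀) (m : ℕ) (hm : 1 ≤ m)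
    (h : ℂ → ℂ)
    (hrep : ∀ᶠ t in nhdsWithin t₀ {t₀}ᶜ, h t = G t / (t - t₀) ^ m) :
    ∀ᶠ t in nhdsWithin t₀ {t₀}ᶜ,
      deriv h t = (deriv G t * (t - t₀) - m * G t) / (t - t₀) ^ (m + 1) := by
  rw [eventually_nhdsWithin_iff] at hrep ⊢
  filter_upwards [hrep.eventually_nhds, hG.eventually_analyticAt] with t ht hGt htne
  have hd : t - t₀ ≠ 0 := sub_ne_zero.mpr htne
  have heq : h =ᶠ[nhds t] fun s => G s / (s - t₀) ^ m := by
    filter_upwards [ht, eventually_ne_nhds htne] with s hs hsne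
    exact hs hsne
  have hGd : HasDerivAt G (deriv G t) t := hGt.differentiableAt.hasDerivAt
  have hpow : HasDerivAt (fun s : ℂ => (s - t₀) ^ m) ((m : ℂ) * (t - t₀) ^ (m - 1) * 1) t :=
    ((hasDerivAt_id t).sub_const t₀).pow m
  have hdiv : HasDerivAt (fun s => G s / (s - t₀) ^ m) ((deriv G t * (t - t₀) ^ m - G t * ((m : ℂ) * (t - t₀) ^ (m - 1) * 1)) / ((t - t₀) ^ m) ^ 2) t := hGd.div hpow (pow_ne_zero m hd)
  rw [heq.deriv_eq, hdiv.deriv]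
  obtain ⟨j, rfl⟩ := Nat.exists_eq_add_of_le hm
  simp only [Nat.add_sub_cancel_left]
  field_simp
  ring

private lemma analyticAt_deriv'' (g : ℂ → ℂ) (t₀ : ℂ) (hg : AnalyticAt ℂ g t₀) :
    AnalyticAt ℂ (deriv g) t₀ :=
  (AnalyticOnNhd.deriv (fun _ hz => hz : AnalyticOnNhd ℂ g {z | AnalyticAt ℂ g z})) t₀ hg

private lemma eval_eq_zero_of_eventually' {F : ℂ → ℂ} {t₀ : ℂ} (hF : ContinuousAt F t₀)
    (h0 : ∀ᶠ t in nhdsWithin t₀ {t₀}ᶜ, F t = 0) : F t₀ = 0 := by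
  have h1 : Filter.Tendsto F (nhdsWithin t₀ {t₀}ᶜ) (nhds (F t₀)) := hF.continuousWithinAt
  have h2 : Filter.Tendsto F (nhdsWithin t₀ {t₀}ᶜ) (nhds 0) :=
    Filter.Tendsto.congr' (h0.mono fun _ e => e.symm) tendsto_const_nhds
  exact tendsto_nhds_unique h1 h2

open Filter

set_option maxHeartbeats 4000000 in
/-- doc -/
theorem statement12 (b₁ b₂ b₃ b₄ : ℝ) (t₀ : ℂ) (ht0 : t₀ ≠ 0) (ht1 : t₀ ≠ 1)
    (h g : ℂ → ℂ) (k : ℕ) (hk : 1 ≤ k)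
    (hg : AnalyticAt ℂ g t₀) (hg0 : g t₀ ≠ 0)
    (hrep : ∀ᶠ t in nhdsWithin t₀ {t₀}ᶜ, h t = g t / (t - t₀) ^ k)
    (hode : ∀ᶠ t in nhdsWithin t₀ {t₀}ᶜ,
      t ^ 2 * (t - 1) ^ 2 * deriv h t * (deriv (deriv h) t) ^ 2
        + ((2 * h t - (2 * t - 1) * deriv h t) * deriv h t
            + (b₁ : ℂ) * (b₂ : ℂ) * (b₃ : ℂ) * (b₄ : ℂ)) ^ 2
      = (deriv h t + (b₁ : ℂ) ^ 2) * (deriv h t + (b₂ : ℂ) ^ 2)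
          * (deriv h t + (b₃ : ℂ) ^ 2) * (deriv h t + (b₄ : ℂ) ^ 2)) :
    k = 1 ∧ g t₀ = t₀ * (t₀ - 1) ∧
      ∃ f : ℂ → ℂ, AnalyticAt ℂ f t₀ ∧
        ∀ᶠ t in nhdsWithin t₀ {t₀}ᶜ, h t = t₀ * (t₀ - 1) / (t - t₀) + f t := by
  obtain ⟨n, rfl⟩ : ∃ n, k = n + 1 := ⟨k - 1, by omega⟩
  have hid : AnalyticAt ℂ (fun t : ℂ => t) t₀ := analyticAt_id
  have hsub : AnalyticAt ℂ (fun t : ℂ => t - t₀) t₀ := hid.sub analyticAt_const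
  have h1a : AnalyticAt ℂ (fun t : ℂ => t - 1) t₀ := hid.sub analyticAt_const
  have hG1 : AnalyticAt ℂ (fun s : ℂ => deriv g s * (s - t₀) - ((n+1 : ℕ) : ℂ) * g s) t₀ :=
    ((analyticAt_deriv'' g t₀ hg).mul hsub).sub (analyticAt_const.mul hg)
  have hG2 : AnalyticAt ℂ (fun s : ℂ => (deriv (fun s : ℂ => deriv g s * (s - t₀) - ((n+1 : ℕ) : ℂ) * g s) s * (s - t₀) - ((n+1+1 : ℕ) : ℂ) * (deriv g s * (s - t₀) - ((n+1 : ℕ) : ℂ) * g s))) t₀ :=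
    ((analyticAt_deriv'' _ t₀ hG1).mul hsub).sub (analyticAt_const.mul hG1)
  have hrep1 : ∀ᶠ t in nhdsWithin t₀ {t₀}ᶜ,
      deriv h t = (deriv g t * (t - t₀) - ((n+1 : ℕ) : ℂ) * g t) / (t - t₀) ^ (n + 1 + 1) :=
    deriv_rep' t₀ g hg (n+1) (by omega) h hrep
  have hrep2 : ∀ᶠ t in nhdsWithin t₀ {t₀}ᶜ,
      deriv (deriv h) t = (deriv (fun s : ℂ => deriv g s * (s - t₀) - ((n+1 : ℕ) : ℂ) * g s) t * (t - t₀) - ((n+1+1 : ℕ) : ℂ) * (deriv g t * (t - t₀) - ((n+1 : ℕ) : ℂ) * g t)) / (t - t₀) ^ (n + 1 + 1 + 1) :=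
    deriv_rep' t₀ (fun s : ℂ => deriv g s * (s - t₀) - ((n+1 : ℕ) : ℂ) * g s) hG1 (n+1+1) (by omega) (deriv h) hrep1
  have hF0 : ∀ᶠ t in nhdsWithin t₀ {t₀}ᶜ,
      t^2*(t-1)^2 * (deriv g t * (t - t₀) - ((n+1 : ℕ) : ℂ) * g t) * ((deriv (fun s : ℂ => deriv g s * (s - t₀) - ((n+1 : ℕ) : ℂ) * g s) t * (t - t₀) - ((n+1+1 : ℕ) : ℂ) * (deriv g t * (t - t₀) - ((n+1 : ℕ) : ℂ) * g t)))^2 * (t-t₀)^n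
      + ((2*g t*(t-t₀) - (2*t-1)*(deriv g t * (t - t₀) - ((n+1 : ℕ) : ℂ) * g t))*(deriv g t * (t - t₀) - ((n+1 : ℕ) : ℂ) * g t) + ((b₁:ℂ)*b₂*b₃*b₄)*(t-t₀)^(2*n+4))^2
      - ((deriv g t * (t - t₀) - ((n+1 : ℕ) : ℂ) * g t) + (b₁:ℂ)^2*(t-t₀)^(n+2))*((deriv g t * (t - t₀) - ((n+1 : ℕ) : ℂ) * g t) + (b₂:ℂ)^2*(t-t₀)^(n+2))
        *((deriv g t * (t - t₀) - ((n+1 : ℕ) : ℂ) * g t) + (b₃:ℂ)^2*(t-t₀)^(n+2))*((deriv g t * (t - t₀) - ((n+1 : ℕ) : ℂ) * g t) + (b₄:ℂ)^2*(t-t₀)^(n+2)) = 0 := by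
    filter_upwards [hrep, hrep1, hrep2, hode, self_mem_nhdsWithin] with t e0 e1 e2 ode ht
    have hd : t - t₀ ≠ 0 := sub_ne_zero.mpr ht
    have hA : g t = h t * (t - t₀) ^ (n + 1) := by
      rw [e0, div_mul_cancel₀ _ (pow_ne_zero _ hd)]
    have hB : (deriv g t * (t - t₀) - ((n+1 : ℕ) : ℂ) * g t) = deriv h t * (t - t₀) ^ (n + 1 + 1) := by
      rw [e1, div_mul_cancel₀ _ (pow_ne_zero _ hd)]
    have hC : (deriv (fun s : ℂ => deriv g s * (s - t₀) - ((n+1 : ℕ) : ℂ) * g s) t * (t - t₀) - ((n+1+1 : ℕ) : ℂ) * (deriv g t * (t - t₀) - ((n+1 : ℕ) : ℂ) * g t)) = deriv (deriv h) t * (t - t₀) ^ (n + 1 + 1 + 1) := by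
      rw [e2, div_mul_cancel₀ _ (pow_ne_zero _ hd)]
    rw [hC, hB, hA]
    linear_combination ((t - t₀) ^ (4*n+8)) * ode
  have hFcont : ContinuousAt (fun s : ℂ =>
      s^2*(s-1)^2 * (deriv g s * (s - t₀) - ((n+1 : ℕ) : ℂ) * g s) * ((deriv (fun s : ℂ => deriv g s * (s - t₀) - ((n+1 : ℕ) : ℂ) * g s) s * (s - t₀) - ((n+1+1 : ℕ) : ℂ) * (deriv g s * (s - t₀) - ((n+1 : ℕ) : ℂ) * g s)))^2 * (s-t₀)^n
      + ((2*g s*(s-t₀) - (2*s-1)*(deriv g s * (s - t₀) - ((n+1 : ℕ) : ℂ) * g s))*(deriv g s * (s - t₀) - ((n+1 : ℕ) : ℂ) * g s) + ((b₁:ℂ)*b₂*b₃*b₄)*(s-t₀)^(2*n+4))^2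
      - ((deriv g s * (s - t₀) - ((n+1 : ℕ) : ℂ) * g s) + (b₁:ℂ)^2*(s-t₀)^(n+2))*((deriv g s * (s - t₀) - ((n+1 : ℕ) : ℂ) * g s) + (b₂:ℂ)^2*(s-t₀)^(n+2))
        *((deriv g s * (s - t₀) - ((n+1 : ℕ) : ℂ) * g s) + (b₃:ℂ)^2*(s-t₀)^(n+2))*((deriv g s * (s - t₀) - ((n+1 : ℕ) : ℂ) * g s) + (b₄:ℂ)^2*(s-t₀)^(n+2))) t₀ := by
    apply AnalyticAt.continuousAt (𝕜 := ℂ)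
    exact ((((hid.pow 2).mul (h1a.pow 2)).mul hG1 |>.mul (hG2.pow 2) |>.mul (hsub.pow _)).add
      (((((analyticAt_const.mul hg).mul hsub).sub
        ((analyticAt_const.mul hid |>.sub analyticAt_const).mul hG1)).mul hG1 |>.add
        (analyticAt_const.mul (hsub.pow _))).pow 2)).sub
      ((((hG1.add (analyticAt_const.mul (hsub.pow _))).mul
        (hG1.add (analyticAt_const.mul (hsub.pow _)))).mul
        (hG1.add (analyticAt_const.mul (hsub.pow _)))).mul
        (hG1.add (analyticAt_const.mul (hsub.pow _))))
  have hFt0 : t₀^2*(t₀-1)^2 * (deriv g t₀ * (t₀ - t₀) - ((n+1 : ℕ) : ℂ) * g t₀) * ((deriv (fun s : ℂ => deriv g s * (s - t₀) - ((n+1 : ℕ) : ℂ) * g s) t₀ * (t₀ - t₀) - ((n+1+1 : ℕ) : ℂ) * (deriv g t₀ * (t₀ - t₀) - ((n+1 : ℕ) : ℂ) * g t₀)))^2 * (t₀-t₀)^n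
      + ((2*g t₀*(t₀-t₀) - (2*t₀-1)*(deriv g t₀ * (t₀ - t₀) - ((n+1 : ℕ) : ℂ) * g t₀))*(deriv g t₀ * (t₀ - t₀) - ((n+1 : ℕ) : ℂ) * g t₀) + ((b₁:ℂ)*b₂*b₃*b₄)*(t₀-t₀)^(2*n+4))^2
      - ((deriv g t₀ * (t₀ - t₀) - ((n+1 : ℕ) : ℂ) * g t₀) + (b₁:ℂ)^2*(t₀-t₀)^(n+2))*((deriv g t₀ * (t₀ - t₀) - ((n+1 : ℕ) : ℂ) * g t₀) + (b₂:ℂ)^2*(t₀-t₀)^(n+2))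
        *((deriv g t₀ * (t₀ - t₀) - ((n+1 : ℕ) : ℂ) * g t₀) + (b₃:ℂ)^2*(t₀-t₀)^(n+2))*((deriv g t₀ * (t₀ - t₀) - ((n+1 : ℕ) : ℂ) * g t₀) + (b₄:ℂ)^2*(t₀-t₀)^(n+2)) = 0 :=
    eval_eq_zero_of_eventually' (t₀ := t₀) hFcont hF0
  have hn : n = 0 := by
    by_contra hn
    have hz : ((t₀ - t₀) : ℂ) ^ n = 0 := by rw [sub_self]; exact zero_pow hn
    have key : (4 * t₀ * (t₀ - 1)) * (((n:ℂ)+1)^4 * (g t₀)^4) = 0 := by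
      push_cast at hFt0
      linear_combination hFt0 + (t₀^2*(t₀-1)^2*((n:ℂ)+1)^3*((n:ℂ)+2)^2*(g t₀)^3) * hz
    have h4 : (4:ℂ) * t₀ * (t₀ - 1) ≠ 0 := by
      have h1' : t₀ - 1 ≠ 0 := sub_ne_zero.mpr ht1
      simp [ht0, h1']
    have h5 : ((n:ℂ)+1)^4 * (g t₀)^4 ≠ 0 :=
      mul_ne_zero (pow_ne_zero _ (Nat.cast_add_one_ne_zero n)) (pow_ne_zero _ hg0)
    exact (mul_ne_zero h4 h5) key
  subst hn
  have key2 : (4 * t₀ * (t₀ - 1) * (g t₀)^3) * (g t₀ - t₀ * (t₀ - 1)) = 0 := by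
    push_cast at hFt0
    linear_combination hFt0
  have hcval : g t₀ = t₀ * (t₀ - 1) := by
    have h4 : (4:ℂ) * t₀ * (t₀ - 1) * (g t₀)^3 ≠ 0 := by
      have h1' : t₀ - 1 ≠ 0 := sub_ne_zero.mpr ht1
      exact mul_ne_zero (mul_ne_zero (mul_ne_zero (by norm_num) ht0) h1') (pow_ne_zero _ hg0)
    have := (mul_eq_zero.mp key2).resolve_left h4
    exact sub_eq_zero.mp this
  refine ⟨rfl, hcval, dslope g t₀, ?_, ?_⟩
  · obtain ⟨p, hp⟩ := hg
    exact hp.has_fpower_series_dslope_fslope.analyticAt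
  · filter_upwards [hrep, self_mem_nhdsWithin] with t e0 ht
    have hd : t - t₀ ≠ 0 := sub_ne_zero.mpr ht
    rw [e0, dslope_of_ne g ht, slope_def_field, ← hcval]
    field_simp
    ring
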